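/- Let (y_x, z_x) be a hill-valley pair and Φ : ℝ≥0³ → ℝ differentiable in its second argument. Then ∫₀^∞ Δ₂Φ(y_x, ⟨y_x, z_x⟩, z_x) dx = ∫₀^∞ ∂₂Φ(y_x, x, z_x) dx, where Δ₂ is the difference ratio in the second argument. -/

import Mathlib

open MeasureTheory

/-- Difference ratio operator: `ΔΦ(u,v) = (Φ(v) − Φ(u))/(v − u)` for `u ≠ v`,
and the derivative `Φ'(u)` when `u = v`. -/
noncomputable def Dratio (Φ : ℝ → ℝ) (u v : ℝ) : ℝ :=
  if u = v then deriv Φ u else (Φ v - Φ u) / (v - u)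

/-- A hill-valley partition `0 = u₀ ≤ v₀ < u₁ < v₁ < u₂ < …` of `ℝ≥0`
together with a hill-valley pair `(y, z)`: on a valley `(uᵢ, vᵢ]`, `y x = uᵢ`
and `z x = vᵢ`; on a hill, `y x = z x = x`. -/
structure HillValleyPair (u v : ℕ → ℝ) (y z : ℝ → ℝ) : Prop where
  u_zero : u 0 = 0
  uv_zero : u 0 ≤ v 0
  v_lt_u : ∀ i, v i < u (i + 1)
  u_lt_v : ∀ i, u (i + 1) < v (i + 1)
  u_tendsto : Filter.Tendsto u Filter.atTop Filter.atTop
  valley : ∀ i, ∀ x ∈ Set.Ioc (u i) (v i), y x = u i ∧ z x = v i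
  hill : ∀ i, ∀ x ∈ Set.Ioc (v i) (u (i + 1)), y x = x ∧ z x = x
  y_zero : y 0 = 0
  z_zero : z 0 = v 0

/-- For a hill-valley pair `(y, z)` and `Φ : ℝ≥0³ → ℝ` differentiable in its
second argument,
`∫₀^∞ Δ₂Φ(y_x, ⟨y_x, z_x⟩, z_x) dx = ∫₀^∞ ∂₂Φ(y_x, x, z_x) dx`. -/
theorem hill_valley_Dratio_integral (u v : ℕ → ℝ) (y z : ℝ → ℝ)
    (hvp : HillValleyPair u v y z) (Φ : ℝ → ℝ → ℝ → ℝ)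
    (hΦ2 : ∀ a c, Differentiable ℝ (fun t => Φ a t c))
    (hint1 : IntegrableOn
      (fun x => Dratio (fun t => Φ (y x) t (z x)) (y x) (z x)) (Set.Ioi 0))
    (hint2 : IntegrableOn
      (fun x => deriv (fun t => Φ (y x) t (z x)) x) (Set.Ioi 0)) :
    ∫ x in Set.Ioi (0:ℝ), Dratio (fun t => Φ (y x) t (z x)) (y x) (z x)
      = ∫ x in Set.Ioi (0:ℝ), deriv (fun t => Φ (y x) t (z x)) x := by
  set f : ℝ → ℝ := fun x => Dratio (fun t => Φ (y x) t (z x)) (y x) (z x) with hf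
  set g : ℝ → ℝ := fun x => deriv (fun t => Φ (y x) t (z x)) x with hg
  -- u is strictly monotone
  have husm : StrictMono u := by
    apply strictMono_nat_of_lt_succ
    intro n
    cases n with
    | zero => exact lt_of_le_of_lt hvp.uv_zero (hvp.v_lt_u 0)
    | succ m => exact lt_trans (hvp.u_lt_v m) (hvp.v_lt_u (m + 1))
  have huv : ∀ i, u i ≤ v i := by
    intro i
    cases i with
    | zero => exact hvp.uv_zero
    | succ m => exact (hvp.u_lt_v m).le
  have hvu : ∀ i, v i ≤ u (i + 1) := fun i => (hvp.v_lt_u i).le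
  have hu0 : ∀ i, 0 ≤ u i := fun i => hvp.u_zero ▸ husm.monotone (Nat.zero_le i)
  -- union of pieces
  have hUnion : (⋃ i, Set.Ioc (u i) (u (i + 1))) = Set.Ioi (0:ℝ) := by
    ext x
    simp only [Set.mem_iUnion, Set.mem_Ioc, Set.mem_Ioi]
    constructor
    · rintro ⟨i, hi, _⟩
      exact lt_of_le_of_lt (hu0 i) hi
    · intro hx
      have hex : ∃ n, x ≤ u n := by
        obtain ⟨n, hn⟩ := (hvp.u_tendsto.eventually_ge_atTop x).exists
        exact ⟨n, hn⟩
      classical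
      set N := Nat.find hex with hN
      have hNle : x ≤ u N := Nat.find_spec hex
      have hN0 : N ≠ 0 := by
        intro h
        rw [h] at hNle
        rw [hvp.u_zero] at hNle
        linarith
      obtain ⟨m, hm⟩ := Nat.exists_eq_succ_of_ne_zero hN0
      have hlt : ¬ x ≤ u m := Nat.find_min hex (by omega)
      have hm' : x ≤ u (m + 1) := by
        have : N = m + 1 := hm
        rw [← this]; exact hNle
      exact ⟨m, by linarith, hm'⟩
  have hmeas : ∀ i, MeasurableSet (Set.Ioc (u i) (u (i + 1))) :=
    fun i => measurableSet_Ioc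
  have hdisj : Pairwise (Function.onFun Disjoint fun i => Set.Ioc (u i) (u (i + 1))) := by
    intro i j hij
    rcases lt_or_gt_of_ne hij with h | h
    · exact Set.Ioc_disjoint_Ioc.mpr
        (le_trans (min_le_left _ _) (le_max_of_le_right (husm.monotone h)))
    · exact Set.Ioc_disjoint_Ioc.mpr
        (le_trans (min_le_right _ _) (le_max_of_le_left (husm.monotone h)))
  have hsub : ∀ i, Set.Ioc (u i) (u (i + 1)) ⊆ Set.Ioi (0:ℝ) := by
    intro i x hx
    exact lt_of_le_of_lt (hu0 i) hx.1
  -- piecewise equality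
  have hpiece : ∀ i, ∫ x in Set.Ioc (u i) (u (i + 1)), f x
      = ∫ x in Set.Ioc (u i) (u (i + 1)), g x := by
    intro i
    have hsplit : Set.Ioc (u i) (u (i + 1))
        = Set.Ioc (u i) (v i) ∪ Set.Ioc (v i) (u (i + 1)) :=
      (Set.Ioc_union_Ioc_eq_Ioc (huv i) (hvu i)).symm
    have hsubV : Set.Ioc (u i) (v i) ⊆ Set.Ioi (0:ℝ) :=
      fun x hx => lt_of_le_of_lt (hu0 i) hx.1
    have hsubH : Set.Ioc (v i) (u (i + 1)) ⊆ Set.Ioi (0:ℝ) :=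
      fun x hx => lt_of_le_of_lt (le_trans (hu0 i) (huv i)) hx.1
    have hdVH : Disjoint (Set.Ioc (u i) (v i)) (Set.Ioc (v i) (u (i + 1))) :=
      Set.Ioc_disjoint_Ioc_of_le le_rfl
    rw [hsplit, setIntegral_union hdVH measurableSet_Ioc
        (hint1.mono_set hsubV) (hint1.mono_set hsubH),
      setIntegral_union hdVH measurableSet_Ioc
        (hint2.mono_set hsubV) (hint2.mono_set hsubH)]
    have hhill : ∫ x in Set.Ioc (v i) (u (i + 1)), f x
        = ∫ x in Set.Ioc (v i) (u (i + 1)), g x := by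
      apply setIntegral_congr_fun measurableSet_Ioc
      intro x hx
      obtain ⟨hyx, hzx⟩ := hvp.hill i x hx
      simp only [hf, hg, Dratio, hyx, hzx, if_true, eq_self_iff_true]
    have hvalley : ∫ x in Set.Ioc (u i) (v i), f x
        = ∫ x in Set.Ioc (u i) (v i), g x := by
      rcases eq_or_lt_of_le (huv i) with heq | hlt
      · rw [heq]; simp
      · have hL : ∫ x in Set.Ioc (u i) (v i), f x
            = Φ (u i) (v i) (v i) - Φ (u i) (u i) (v i) := by
          have : ∀ x ∈ Set.Ioc (u i) (v i),
              f x = (Φ (u i) (v i) (v i) - Φ (u i) (u i) (v i)) / (v i - u i) := by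
            intro x hx
            obtain ⟨hyx, hzx⟩ := hvp.valley i x hx
            simp only [hf, Dratio, hyx, hzx, if_neg hlt.ne]
          rw [setIntegral_congr_fun measurableSet_Ioc this, setIntegral_const,
            Real.volume_real_Ioc_of_le hlt.le, smul_eq_mul]
          rw [mul_comm, div_mul_cancel₀ _ (by linarith : v i - u i ≠ 0)]
        have hR : ∫ x in Set.Ioc (u i) (v i), g x
            = Φ (u i) (v i) (v i) - Φ (u i) (u i) (v i) := by
          have hcg : ∫ x in Set.Ioc (u i) (v i), g x
              = ∫ x in Set.Ioc (u i) (v i),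
                  deriv (fun t => Φ (u i) t (v i)) x := by
            apply setIntegral_congr_fun measurableSet_Ioc
            intro x hx
            obtain ⟨hyx, hzx⟩ := hvp.valley i x hx
            simp only [hg, hyx, hzx]
          rw [hcg, ← intervalIntegral.integral_of_le hlt.le]
          apply intervalIntegral.integral_deriv_eq_sub
          · intro x _
            exact (hΦ2 (u i) (v i)).differentiableAt
          · rw [intervalIntegrable_iff_integrableOn_Ioc_of_le hlt.le]
            have : IntegrableOn g (Set.Ioc (u i) (v i)) := hint2.mono_set hsubV
            apply this.congr_fun _ measurableSet_Ioc
            intro x hx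
            obtain ⟨hyx, hzx⟩ := hvp.valley i x hx
            simp only [hg, hyx, hzx]
        rw [hL, hR]
    rw [hhill, hvalley]
  calc ∫ x in Set.Ioi (0:ℝ), f x
      = ∫ x in ⋃ i, Set.Ioc (u i) (u (i + 1)), f x := by rw [hUnion]
    _ = ∑' i, ∫ x in Set.Ioc (u i) (u (i + 1)), f x :=
        integral_iUnion hmeas hdisj (by rw [hUnion]; exact hint1)
    _ = ∑' i, ∫ x in Set.Ioc (u i) (u (i + 1)), g x := by
        exact tsum_congr hpiece
    _ = ∫ x in ⋃ i, Set.Ioc (u i) (u (i + 1)), g x :=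
        (integral_iUnion hmeas hdisj (by rw [hUnion]; exact hint2)).symm
    _ = ∫ x in Set.Ioi (0:ℝ), g x := by rw [hUnion]
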